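/- SHAP values of a linear model with independent features: Let n, m be positive integers, let μ = μ₁ ⊗ ⋯ ⊗ μₙ be a product probability measure on ℝⁿ whose factors μⱼ each have finite first moment with mean mⱼ, and let f(x) = B₀ + Bᵀx with B₀ ∈ ℝᵐ and B ∈ ℝⁿˣᵐ. Fix x ∈ ℝⁿ and define the game v_f(S) = ∫ f(z_{S,x}(y)) dμ(y) − ∫ f dμ, where z_{S,x}(y) equals x on coordinates in S and y elsewhere (under independence this coincides with the centered conditional expectation E[f(X) | X_S = x_S] − E[f(X)]). Then for every i ∈ {1,…,n}, the SHAP value φᵢ(f;x) := Σ_{S ⊆ [n]∖{i}} (|S|!(n−|S|−1)!/n!) [v_f(S ∪ {i}) − v_f(S)] equals Bᵢ(xᵢ − mᵢ) ∈ ℝᵐ, where Bᵢ is the i-th row of B. -/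

import Mathlib

open Finset MeasureTheory

/-- The Shapley weight `w(S) = |S|!(n−|S|−1)!/n!` (as a function of `s = |S|`). -/
noncomputable def shapWeight (n s : ℕ) : ℝ :=
  (Nat.factorial s : ℝ) * (Nat.factorial (n - s - 1) : ℝ) / (Nat.factorial n : ℝ)

/-- The vector-valued Shapley operator in combinatorial (subset) form. -/
noncomputable def subsetShapOp (n m : ℕ) (v : Finset (Fin n) → (Fin m → ℝ)) :
    Fin n → Fin m → ℝ :=
  fun i => ∑ S ∈ ((Finset.univ : Finset (Fin n)).erase i).powerset,
    shapWeight n S.card • (v (insert i S) - v S)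

/-- The hybrid vector `z_{S,x}(y)`, equal to `x` on the coordinates in `S` and to `y`
elsewhere. -/
def hybrid {n : ℕ} (S : Finset (Fin n)) (x y : Fin n → ℝ) : Fin n → ℝ :=
  fun j => if j ∈ S then x j else y j

/-- The linear predictor `f(x) = B₀ + Bᵀx`, where `B : ℝⁿˣᵐ` has rows
`Bⱼ ∈ ℝᵐ` and `Bᵀx = Σⱼ xⱼ Bⱼ`. -/
def linearModel (n m : ℕ) (B0 : Fin m → ℝ) (B : Fin n → (Fin m → ℝ)) (x : Fin n → ℝ) :
    Fin m → ℝ :=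
  B0 + ∑ j : Fin n, x j • B j

/-- The Shapley weights over subsets of `[n] \ {i}` sum to `1`. -/
lemma shapWeight_sum {n : ℕ} (hn : 0 < n) (i : Fin n) :
    ∑ S ∈ ((Finset.univ : Finset (Fin n)).erase i).powerset, shapWeight n S.card = 1 := by
  have hcard : ((Finset.univ : Finset (Fin n)).erase i).card = n - 1 := by
    rw [Finset.card_erase_of_mem (Finset.mem_univ i), Finset.card_univ, Fintype.card_fin]
  rw [Finset.sum_powerset, hcard]
  have hterm : ∀ j ∈ Finset.range (n - 1 + 1),
      ∑ S ∈ Finset.powersetCard j ((Finset.univ : Finset (Fin n)).erase i),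
        shapWeight n S.card = 1 / n := by
    intro j hj
    have hj' : j ≤ n - 1 := Nat.lt_succ_iff.mp (Finset.mem_range.mp hj)
    have hsum : ∀ S ∈ Finset.powersetCard j ((Finset.univ : Finset (Fin n)).erase i),
        shapWeight n S.card = shapWeight n j := by
      intro S hS
      rw [(Finset.mem_powersetCard.mp hS).2]
    rw [Finset.sum_congr rfl hsum, Finset.sum_const, Finset.card_powersetCard, hcard,
      nsmul_eq_mul]
    have h1 : ((n-1).choose j * j.factorial * ((n-1)-j).factorial : ℕ) = (n-1).factorial :=
      Nat.choose_mul_factorial_mul_factorial hj'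
    have h2 : (n.factorial : ℝ) = n * (n-1).factorial := by
      rw [← Nat.mul_factorial_pred hn.ne']; push_cast; ring
    have h3 : n - j - 1 = n - 1 - j := by omega
    have hne : (n.factorial : ℝ) ≠ 0 := Nat.cast_ne_zero.mpr (Nat.factorial_ne_zero n)
    have hnne : (n : ℝ) ≠ 0 := Nat.cast_ne_zero.mpr hn.ne'
    rw [shapWeight, h3]
    field_simp
    rw [h2]
    push_cast [← h1]
    ring
  rw [Finset.sum_congr rfl hterm, Finset.sum_const, nsmul_eq_mul]
  have hsucc : (n - 1 + 1 : ℕ) = n := Nat.succ_pred_eq_of_pos hn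
  rw [hsucc]
  rw [Finset.card_range]; field_simp

/-- The coordinate projection is measure-preserving from the product measure to the factor. -/
lemma measurePreserving_eval_pi {n : ℕ} (μi : Fin n → Measure ℝ)
    [∀ j, IsProbabilityMeasure (μi j)] (j : Fin n) :
    MeasurePreserving (fun y : Fin n → ℝ => y j) (Measure.pi μi) (μi j) := by
  refine ⟨measurable_pi_apply j, ?_⟩
  ext s hs
  rw [Measure.map_apply (measurable_pi_apply j) hs]
  have hpre : (fun y : Fin n → ℝ => y j) ⁻¹' s
      = Set.pi Set.univ (Function.update (fun _ : Fin n => (Set.univ : Set ℝ)) j s) := by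
    ext y
    simp only [Set.mem_preimage, Set.mem_univ_pi, Function.update]
    constructor
    · intro h k; by_cases hk : k = j <;> simp [hk, h]
    · intro h; have := h j; simpa using this
  rw [hpre, Measure.pi_pi]
  rw [Finset.prod_eq_single j (fun b _ hb => by simp [Function.update, hb]) (by simp)]
  simp [Function.update]

/-- Integral of the linear model at the hybrid point. -/
lemma integral_linearModel_hybrid (n m : ℕ)
    (μi : Fin n → Measure ℝ) [∀ j, IsProbabilityMeasure (μi j)]
    (hmom : ∀ j, Integrable (fun t : ℝ => t) (μi j))
    (B0 : Fin m → ℝ) (B : Fin n → (Fin m → ℝ)) (x : Fin n → ℝ) (S : Finset (Fin n)) :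
    ∫ y, linearModel n m B0 B (hybrid S x y) ∂(Measure.pi μi)
      = B0 + ∑ j : Fin n, (if j ∈ S then x j else ∫ t, t ∂(μi j)) • B j := by
  have hint : ∀ j : Fin n,
      Integrable (fun y : Fin n → ℝ => (if j ∈ S then x j else y j) • B j)
        (Measure.pi μi) := by
    intro j
    by_cases hj : j ∈ S
    · simp only [hj, if_true]
      exact integrable_const _
    · simp only [hj, if_false]
      have hcoord : Integrable (fun y : Fin n → ℝ => y j) (Measure.pi μi) :=
        ((measurePreserving_eval_pi μi j).integrable_comp
          (hmom j).aestronglyMeasurable).mpr (hmom j)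
      exact hcoord.smul_const (B j)
  have hcoordInt : ∀ j : Fin n,
      (∫ y, (if j ∈ S then x j else y j) ∂(Measure.pi μi))
        = (if j ∈ S then x j else ∫ t, t ∂(μi j)) := by
    intro j
    by_cases hj : j ∈ S
    · simp [hj]
    · simp only [hj, if_false]
      calc ∫ y, y j ∂(Measure.pi μi)
          = ∫ t, t ∂((Measure.pi μi).map (fun y : Fin n → ℝ => y j)) :=
            (integral_map (φ := fun y : Fin n → ℝ => y j) (f := fun t : ℝ => t)
              (measurable_pi_apply j).aemeasurable
              measurable_id.aestronglyMeasurable).symm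
        _ = ∫ t, t ∂(μi j) := by rw [(measurePreserving_eval_pi μi j).map_eq]
  have heq : (fun y : Fin n → ℝ => linearModel n m B0 B (hybrid S x y))
      = fun y => B0 + ∑ j : Fin n, (if j ∈ S then x j else y j) • B j := by
    funext y
    simp [linearModel, hybrid]
  rw [heq, integral_add (integrable_const B0) (integrable_finset_sum _ fun j _ => hint j),
    integral_const, probReal_univ, one_smul,
    integral_finset_sum _ fun j _ => hint j]
  congr 1
  refine Finset.sum_congr rfl fun j _ => ?_
  rw [integral_smul_const, hcoordInt j]

/-- **SHAP values of a linear model with independent features.**  For a product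
probability measure `μ = μ₁ ⊗ ⋯ ⊗ μₙ` whose factors have finite first moments
`mⱼ = ∫ t dμⱼ`, the SHAP value of feature `i` for the linear predictor
`f(x) = B₀ + Bᵀx` at `x`, computed from the game
`v_f(S) = ∫ f(z_{S,x}(y)) dμ(y) − ∫ f dμ`, equals `Bᵢ(xᵢ − mᵢ)`. -/
theorem shap_linear_independent (n m : ℕ) (hn : 0 < n) (hm : 0 < m)
    (μi : Fin n → Measure ℝ) [∀ j, IsProbabilityMeasure (μi j)]
    (hmom : ∀ j, Integrable (fun t : ℝ => t) (μi j))
    (B0 : Fin m → ℝ) (B : Fin n → (Fin m → ℝ)) (x : Fin n → ℝ) :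
    ∀ i : Fin n,
      subsetShapOp n m
        (fun S =>
          (∫ y, linearModel n m B0 B (hybrid S x y) ∂(Measure.pi μi))
            - ∫ y, linearModel n m B0 B y ∂(Measure.pi μi)) i
      = (x i - ∫ t, t ∂(μi i)) • B i := by
  intro i
  have hI := integral_linearModel_hybrid n m μi hmom B0 B x
  have hdiff : ∀ S ∈ ((Finset.univ : Finset (Fin n)).erase i).powerset,
      ((∫ y, linearModel n m B0 B (hybrid (insert i S) x y) ∂(Measure.pi μi))
          - ∫ y, linearModel n m B0 B y ∂(Measure.pi μi))
        - ((∫ y, linearModel n m B0 B (hybrid S x y) ∂(Measure.pi μi))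
          - ∫ y, linearModel n m B0 B y ∂(Measure.pi μi))
        = (x i - ∫ t, t ∂(μi i)) • B i := by
    intro S hS
    have hiS : i ∉ S := fun h =>
      (Finset.mem_erase.mp (Finset.mem_powerset.mp hS h)).1 rfl
    rw [sub_sub_sub_cancel_right, hI (insert i S), hI S]
    rw [add_sub_add_left_eq_sub, ← Finset.sum_sub_distrib]
    rw [Finset.sum_eq_single i]
    · rw [← sub_smul]
      congr 1
      simp [hiS]
    · intro j _ hji
      have : (j ∈ insert i S) ↔ (j ∈ S) := by
        simp [Finset.mem_insert, hji]
      simp only [this, sub_self]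
    · intro h; exact absurd (Finset.mem_univ i) h
  rw [subsetShapOp, Finset.sum_congr rfl fun S hS => by rw [hdiff S hS],
    ← Finset.sum_smul, shapWeight_sum hn i, one_smul]
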